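/- arXiv:2204.02457 — 3 statements merged into one kernel-verified Lean document; each statement's English description precedes it below -/
import Mathlib

section
/- Let N ≥ 1 and let 𝔛 be a non-empty compact metric space. If ℱ is an uncountable family of pairwise disjoint subsets of ℝ^N, each homeomorphic to 𝔛, then there exist a set X₀ ∈ ℱ and a sequence X₁, X₂, … of elements of ℱ with X_i ≠ X₀ (hence X_i ∩ X₀ = ∅) for each i ≥ 1, such that the sequence {X_i, i ∈ ℕ} converges homeomorphically to X₀. -/
open Metric Set

/-- A sequence of sets `X 1, X 2, …` in `ℝ^N` converges homeomorphically to `X₀` if for each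
`ε > 0` there is `n` such that for every `i ≥ n` there is an `ε`-homeomorphism `X₀ ≅ X i`,
i.e. a homeomorphism moving every point a distance at most `ε`. -/
def ConvergesHomeo {N : ℕ} (X : ℕ → Set (EuclideanSpace ℝ (Fin N)))
    (X₀ : Set (EuclideanSpace ℝ (Fin N))) : Prop :=
  ∀ ε : ℝ, 0 < ε → ∃ n : ℕ, ∀ i : ℕ, n ≤ i → ∃ h : X₀ ≃ₜ X i,
    ∀ x : X₀, dist (x : EuclideanSpace ℝ (Fin N)) (h x : EuclideanSpace ℝ (Fin N)) ≤ ε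

/-- In a second countable space, a set which is not countable has an accumulation point
belonging to the set. -/
lemma exists_mem_accPt_of_not_countable {α : Type*} [TopologicalSpace α]
    [SecondCountableTopology α] {S : Set α} (h : ¬ S.Countable) :
    ∃ x ∈ S, AccPt x (Filter.principal S) := by
  by_contra hc
  push_neg at hc
  apply h
  have key : ∀ x ∈ S, ∃ u ∈ TopologicalSpace.countableBasis α, x ∈ u ∧ u ∩ S ⊆ {x} := by
    intro x hx
    have := hc x hx
    rw [accPt_iff_nhds] at this
    push_neg at this
    obtain ⟨U, hU, hU2⟩ := this
    obtain ⟨u, hu, hxu, huU⟩ :=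
      (TopologicalSpace.isBasis_countableBasis α).mem_nhds_iff.mp hU
    exact ⟨u, hu, hxu, fun y ⟨hyu, hyS⟩ => hU2 y ⟨huU hyu, hyS⟩⟩
  choose! u hu hxu hsub using key
  have hinj : Set.InjOn u S := by
    intro x hx y hy hxy
    have : y ∈ u x ∩ S := ⟨hxy ▸ hxu y hy, hy⟩
    exact ((hsub x hx) this).symm ▸ rfl
  have : (u '' S).Countable :=
    (TopologicalSpace.countable_countableBasis α).mono (Set.image_subset_iff.mpr hu)
  exact (Set.countable_of_injective_of_countable_image hinj this)

theorem stmt0 {N : ℕ} (hN : 1 ≤ N) (𝔛 : Type*) [MetricSpace 𝔛] [CompactSpace 𝔛] [Nonempty 𝔛]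
    (F : Set (Set (EuclideanSpace ℝ (Fin N))))
    (hunc : ¬ F.Countable)
    (hdisj : F.Pairwise Disjoint)
    (hhomeo : ∀ X ∈ F, Nonempty (X ≃ₜ 𝔛)) :
    ∃ X₀ ∈ F, ∃ X : ℕ → Set (EuclideanSpace ℝ (Fin N)),
      (∀ i : ℕ, 1 ≤ i → X i ∈ F) ∧ (∀ i : ℕ, 1 ≤ i → X i ≠ X₀) ∧
      ConvergesHomeo (fun i => X (i + 1)) X₀ := by
  -- choose a homeomorphism for each member of F
  have hch : ∀ Z : F, Nonempty ((Z : Set (EuclideanSpace ℝ (Fin N))) ≃ₜ 𝔛) :=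
    fun Z => hhomeo Z.1 Z.2
  set e : ∀ Z : F, (Z : Set (EuclideanSpace ℝ (Fin N))) ≃ₜ 𝔛 :=
    fun Z => (hch Z).some with he
  -- the induced continuous maps 𝔛 → ℝ^N
  set g : F → C(𝔛, EuclideanSpace ℝ (Fin N)) := fun Z =>
    ⟨fun p => ((e Z).symm p : EuclideanSpace ℝ (Fin N)), by continuity⟩ with hg
  have hrange : ∀ Z : F, Set.range (g Z) = (Z : Set (EuclideanSpace ℝ (Fin N))) := by
    intro Z
    have : Set.range (g Z) = Set.range (Subtype.val ∘ (e Z).symm) := rfl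
    rw [this, Set.range_comp, (e Z).symm.surjective.range_eq, Set.image_univ,
      Subtype.range_coe]
  have hginj : Function.Injective g := by
    intro Z W hZW
    have : (Z : Set (EuclideanSpace ℝ (Fin N))) = (W : Set (EuclideanSpace ℝ (Fin N))) := by
      rw [← hrange Z, ← hrange W, hZW]
    exact Subtype.ext this
  -- the image of g is not countable
  have hSunc : ¬ (Set.range g).Countable := by
    intro hcnt
    apply hunc
    rw [← Set.countable_coe_iff] at *
    exact (Equiv.ofInjective g hginj).countable_iff.mpr hcnt
  obtain ⟨f₀, hf₀S, hacc⟩ := exists_mem_accPt_of_not_countable hSunc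
  obtain ⟨Z₀, rfl⟩ := hf₀S
  rw [accPt_iff_nhds] at hacc
  -- choose a sequence of other elements converging to g Z₀
  have hseq : ∀ n : ℕ, ∃ Z : F, Z ≠ Z₀ ∧ dist (g Z) (g Z₀) < 1 / (n + 1) := by
    intro n
    obtain ⟨y, ⟨hyb, hyS⟩, hyne⟩ := hacc (Metric.ball (g Z₀) (1 / (n + 1)))
      (Metric.ball_mem_nhds _ (by positivity))
    obtain ⟨Z, rfl⟩ := hyS
    exact ⟨Z, fun h => hyne (by rw [h]), Metric.mem_ball.mp hyb⟩
  choose Zs hZsne hZsdist using hseq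
  refine ⟨Z₀.1, Z₀.2, fun i => (Zs (i - 1)).1, ?_, ?_, ?_⟩
  · intro i _; exact (Zs (i - 1)).2
  · intro i _ h
    exact hZsne (i - 1) (Subtype.ext h)
  · intro ε hε
    obtain ⟨n, hn⟩ := exists_nat_one_div_lt hε
    refine ⟨n, fun i hi => ?_⟩
    simp only [Nat.add_sub_cancel]
    set Z := Zs i
    refine ⟨(e Z₀).trans (e Z).symm, fun x => ?_⟩
    have hx : (x : EuclideanSpace ℝ (Fin N)) = g Z₀ ((e Z₀) x) := by
      simp [hg, he]
    rw [hx]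
    show dist ((g Z₀) ((e Z₀) x)) ((g Z) ((e Z₀) x)) ≤ ε
    calc dist (g Z₀ ((e Z₀) x)) (g Z ((e Z₀) x)) ≤ dist (g Z₀) (g Z) :=
          ContinuousMap.dist_apply_le_dist _
      _ ≤ ε := by
          rw [dist_comm]
          refine le_trans (hZsdist i).le (le_trans ?_ hn.le)
          have : (n : ℝ) ≤ i := Nat.cast_le.mpr hi
          gcongr <;> linarith
end

section
/- Let N ≥ 1 and let X₀ ⊆ ℝ^N be a compactum. The following are equivalent: (α) there exists a sequence X₁, X₂, … of pairwise disjoint compacta contained in ℝ^N ∖ X₀ such that {X_i, i ∈ ℕ} converges homeomorphically to X₀; (β) for every ε > 0 there exists a topological embedding h_ε : X₀ → ℝ^N such that X₀ ∩ h_ε(X₀) = ∅ and d(x, h_ε(x)) ≤ ε for each x ∈ X₀. -/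
open Metric Set

-- key step lemma
lemma key_step {N : ℕ} (X₀ : Set (EuclideanSpace ℝ (Fin N))) (hne : X₀.Nonempty)
    (hcpt : IsCompact X₀)
    (hβ : ∀ ε : ℝ, 0 < ε → ∃ h : X₀ → EuclideanSpace ℝ (Fin N),
      Topology.IsEmbedding h ∧ X₀ ∩ Set.range h = ∅ ∧
      ∀ x : X₀, dist (x : EuclideanSpace ℝ (Fin N)) (h x) ≤ ε)
    (n : ℕ) (T : Set (EuclideanSpace ℝ (Fin N))) (hT : IsCompact T)
    (hdT : Disjoint T X₀) :
    ∃ K : Set (EuclideanSpace ℝ (Fin N)), K.Nonempty ∧ IsCompact K ∧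
      Disjoint K X₀ ∧ Disjoint K T ∧
      ∃ e : X₀ ≃ₜ K, ∀ x : X₀,
        dist (x : EuclideanSpace ℝ (Fin N)) (e x : EuclideanSpace ℝ (Fin N)) ≤ 1 / (n + 1) := by
  -- find δ > 0 with infDist t X₀ ≥ δ for all t ∈ T (or δ = 1 if T empty)
  obtain ⟨δ, hδpos, hδ⟩ : ∃ δ : ℝ, 0 < δ ∧ ∀ t ∈ T, δ ≤ infDist t X₀ := by
    rcases T.eq_empty_or_nonempty with rfl | hTne
    · exact ⟨1, one_pos, fun t ht => absurd ht (notMem_empty t)⟩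
    · obtain ⟨t₀, ht₀, hmin⟩ := hT.exists_isMinOn hTne
        (continuous_infDist_pt X₀).continuousOn
      refine ⟨infDist t₀ X₀, ?_, hmin⟩
      exact (hcpt.isClosed.notMem_iff_infDist_pos hne).mp (disjoint_left.mp hdT ht₀)
  set ε : ℝ := min (δ / 2) (1 / (n + 1)) with hε
  have hεpos : 0 < ε := lt_min (by linarith) (by positivity)
  obtain ⟨h, hemb, hdisj, hdist⟩ := hβ ε hεpos
  refine ⟨Set.range h, Set.range_nonempty_iff_nonempty.mpr
    (Nonempty.to_subtype hne), ?_, ?_, ?_, ?_⟩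
  · haveI : CompactSpace ↥X₀ := isCompact_iff_compactSpace.mp hcpt
    exact isCompact_range hemb.continuous
  · rw [Set.disjoint_iff_inter_eq_empty, Set.inter_comm]
    exact hdisj
  · rw [Set.disjoint_left]
    rintro _ ⟨x, rfl⟩ hmem
    have h1 : infDist (h x) X₀ ≤ ε := by
      calc infDist (h x) X₀ ≤ dist (h x) (x : EuclideanSpace ℝ (Fin N)) :=
            infDist_le_dist_of_mem x.2
        _ = dist (x : EuclideanSpace ℝ (Fin N)) (h x) := dist_comm _ _
        _ ≤ ε := hdist x
    have h2 : δ ≤ infDist (h x) X₀ := hδ _ hmem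
    have : ε ≤ δ / 2 := min_le_left _ _
    linarith
  · refine ⟨Topology.IsEmbedding.toHomeomorph hemb, fun x => ?_⟩
    have : ((Topology.IsEmbedding.toHomeomorph hemb x : Set.range h) :
        EuclideanSpace ℝ (Fin N)) = h x := rfl
    rw [this]
    exact le_trans (hdist x) (min_le_right _ _)

theorem stmt4 {N : ℕ} (hN : 1 ≤ N)
    (X₀ : Set (EuclideanSpace ℝ (Fin N))) (hne : X₀.Nonempty) (hcpt : IsCompact X₀) :
    (∃ X : ℕ → Set (EuclideanSpace ℝ (Fin N)),
      (∀ i : ℕ, (X i).Nonempty ∧ IsCompact (X i)) ∧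
      (∀ i : ℕ, X i ⊆ X₀ᶜ) ∧
      (∀ i j : ℕ, i ≠ j → Disjoint (X i) (X j)) ∧
      ConvergesHomeo X X₀)
    ↔
    (∀ ε : ℝ, 0 < ε → ∃ h : X₀ → EuclideanSpace ℝ (Fin N),
      Topology.IsEmbedding h ∧ X₀ ∩ Set.range h = ∅ ∧
      ∀ x : X₀, dist (x : EuclideanSpace ℝ (Fin N)) (h x) ≤ ε) := by
  constructor
  · rintro ⟨X, hX, hXc, hXd, hconv⟩ ε hε
    obtain ⟨n, hn⟩ := hconv ε hε
    obtain ⟨e, he⟩ := hn n le_rfl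
    refine ⟨fun x => (e x : EuclideanSpace ℝ (Fin N)), ?_, ?_, he⟩
    · exact Topology.IsEmbedding.subtypeVal.comp e.isEmbedding
    · have : Set.range (fun x : X₀ => (e x : EuclideanSpace ℝ (Fin N))) ⊆ X n := by
        rintro _ ⟨x, rfl⟩; exact (e x).2
      rw [Set.eq_empty_iff_forall_notMem]
      rintro y ⟨hy1, hy2⟩
      exact hXc n (this hy2) hy1
  · intro hβ
    choose K hKne hKc hKdX hKdT e he using key_step X₀ hne hcpt hβ
    let G : ℕ → {T : Set (EuclideanSpace ℝ (Fin N)) // IsCompact T ∧ Disjoint T X₀} :=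
      fun n => Nat.rec ⟨∅, isCompact_empty, disjoint_bot_left⟩
        (fun m Tm => ⟨Tm.1 ∪ K m Tm.1 Tm.2.1 Tm.2.2,
          Tm.2.1.union (hKc m Tm.1 Tm.2.1 Tm.2.2),
          Set.disjoint_union_left.mpr ⟨Tm.2.2, hKdX m Tm.1 Tm.2.1 Tm.2.2⟩⟩) n
    set X : ℕ → Set (EuclideanSpace ℝ (Fin N)) :=
      fun n => K n (G n).1 (G n).2.1 (G n).2.2 with hXdef
    have hGsucc : ∀ n, (G (n + 1)).1 = (G n).1 ∪ X n := fun n => rfl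
    have hmono : ∀ m n : ℕ, m ≤ n → (G m).1 ⊆ (G n).1 := by
      intro m n hmn
      induction n with
      | zero => simp_all
      | succ k ih =>
        rcases Nat.le_succ_iff.mp hmn with h | h
        · exact (ih h).trans (by rw [hGsucc]; exact Set.subset_union_left)
        · rw [h]
    have hXsub : ∀ m n : ℕ, m < n → X m ⊆ (G n).1 := by
      intro m n hmn
      exact le_trans (by rw [hGsucc]; exact Set.subset_union_right) (hmono (m+1) n hmn)
    have hdisj : ∀ i j : ℕ, i < j → Disjoint (X i) (X j) := by
      intro i j hij
      exact (Disjoint.mono_right (hXsub i j hij) (hKdT j (G j).1 (G j).2.1 (G j).2.2)).symm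
    refine ⟨X, fun i => ⟨hKne _ _ _ _, hKc _ _ _ _⟩, ?_, ?_, ?_⟩
    · intro i
      exact Set.subset_compl_iff_disjoint_right.mpr (hKdX _ _ _ _)
    · intro i j hij
      rcases lt_or_gt_of_ne hij with h | h
      · exact hdisj i j h
      · exact (hdisj j i h).symm
    · intro ε hε
      obtain ⟨n, hn⟩ := exists_nat_one_div_lt hε
      refine ⟨n, fun i hi => ⟨e i _ _ _, fun x => ?_⟩⟩
      refine le_trans (he i _ _ _ x) (le_trans ?_ hn.le)
      apply one_div_le_one_div_of_le
      · positivity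
      · have : (n : ℝ) ≤ (i : ℝ) := Nat.cast_le.mpr hi
        linarith
end

section
/- Let N ≥ 4. Set W = [−1,1]^{N−1} × [−2,0] ⊆ ℝ^N, Q = [−1/2,1/2]^{N−1} × [0,1], and P = W ∩ Q. Let F : W → ℝ^N be a topological embedding such that F(x) = x for all x ∈ ∂W ∖ P and F(P) ⊆ Q, and put Σ = F(∂W). Then for each ε > 0 there exists an ε-homeomorphism ψ_ε of ∂W onto a subset of ℝ^N such that ψ_ε(∂W) ⊆ Ext(∂W) and (ℝ^N, ψ_ε(∂W)) ≅ (ℝ^N, Σ). -/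
open Metric Set

/-- The box `W = [-1,1]^{N-1} × [-2,0]` in `ℝ^N` (the last coordinate is the distinguished one). -/
def cubeW (N : ℕ) : Set (EuclideanSpace ℝ (Fin N)) :=
  WithLp.ofLp ⁻¹' Set.univ.pi fun i : Fin N => if (i : ℕ) = N - 1 then Set.Icc (-2 : ℝ) 0 else Set.Icc (-1) 1

/-- The box `Q = [-1/2,1/2]^{N-1} × [0,1]` in `ℝ^N`. -/
def cubeQ (N : ℕ) : Set (EuclideanSpace ℝ (Fin N)) :=
  WithLp.ofLp ⁻¹' Set.univ.pi fun i : Fin N =>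
    if (i : ℕ) = N - 1 then Set.Icc (0 : ℝ) 1 else Set.Icc (-(1/2)) (1/2)

/-- `P = W ∩ Q`. -/
def cubeP (N : ℕ) : Set (EuclideanSpace ℝ (Fin N)) := cubeW N ∩ cubeQ N

/-- The interior domain `Int S` of an `(N-1)`-sphere `S ⊆ ℝ^N`: the points of the complement
whose connected component in the complement is bounded. -/
def sphereInt {N : ℕ} (S : Set (EuclideanSpace ℝ (Fin N))) : Set (EuclideanSpace ℝ (Fin N)) :=
  {x | x ∉ S ∧ Bornology.IsBounded (connectedComponentIn Sᶜ x)}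

/-- The exterior domain `Ext S` of an `(N-1)`-sphere `S ⊆ ℝ^N`: the points of the complement
whose connected component in the complement is unbounded. -/
def sphereExt {N : ℕ} (S : Set (EuclideanSpace ℝ (Fin N))) : Set (EuclideanSpace ℝ (Fin N)) :=
  {x | x ∉ S ∧ ¬ Bornology.IsBounded (connectedComponentIn Sᶜ x)}

/-- `(ℝ^N, X) ≅ (ℝ^N, Y)`: some self-homeomorphism of `ℝ^N` carries `X` onto `Y`. -/
def AmbHomeo {N : ℕ} (X Y : Set (EuclideanSpace ℝ (Fin N))) : Prop :=
  ∃ h : (EuclideanSpace ℝ (Fin N)) ≃ₜ (EuclideanSpace ℝ (Fin N)), h '' X = Y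

namespace Stmt7Aux

variable {n : ℕ}

/-- sup norm of the coordinates of a point of Euclidean space -/
noncomputable def Ms (y : EuclideanSpace ℝ (Fin n)) : ℝ := ‖(fun i => y i : Fin n → ℝ)‖

/-- sup norm of the coordinates off `i₀` -/
noncomputable def Hs (i₀ : Fin n) (y : EuclideanSpace ℝ (Fin n)) : ℝ :=
  ‖(fun i => if i = i₀ then 0 else y i : Fin n → ℝ)‖

lemma Ms_nonneg (y : EuclideanSpace ℝ (Fin n)) : 0 ≤ Ms y := norm_nonneg _

lemma Hs_nonneg (i₀ : Fin n) (y : EuclideanSpace ℝ (Fin n)) : 0 ≤ Hs i₀ y := norm_nonneg _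

lemma abs_le_Ms (y : EuclideanSpace ℝ (Fin n)) (i : Fin n) : |y i| ≤ Ms y := by
  simpa [Ms] using norm_le_pi_norm (fun i => y i : Fin n → ℝ) i

lemma Ms_le {y : EuclideanSpace ℝ (Fin n)} {r : ℝ} (hr : 0 ≤ r)
    (h : ∀ i, |y i| ≤ r) : Ms y ≤ r := by
  rw [Ms, pi_norm_le_iff_of_nonneg hr]
  simpa using h

lemma abs_le_Hs {i₀ : Fin n} (y : EuclideanSpace ℝ (Fin n)) {i : Fin n} (hi : i ≠ i₀) :
    |y i| ≤ Hs i₀ y := by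
  have := norm_le_pi_norm (fun i => if i = i₀ then 0 else y i : Fin n → ℝ) i
  simpa [Hs, hi] using this

lemma Hs_le {i₀ : Fin n} {y : EuclideanSpace ℝ (Fin n)} {r : ℝ} (hr : 0 ≤ r)
    (h : ∀ i, i ≠ i₀ → |y i| ≤ r) : Hs i₀ y ≤ r := by
  rw [Hs, pi_norm_le_iff_of_nonneg hr]
  intro i
  by_cases hi : i = i₀ <;> simp [hi, hr]
  · exact h i hi

lemma Hs_lt {i₀ : Fin n} {y : EuclideanSpace ℝ (Fin n)} {r : ℝ} (hr : 0 < r)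
    (h : ∀ i, i ≠ i₀ → |y i| < r) : Hs i₀ y < r := by
  rw [Hs, pi_norm_lt_iff hr]
  intro i
  by_cases hi : i = i₀ <;> simp [hi, hr]
  · exact h i hi

lemma Ms_lt_iff {y : EuclideanSpace ℝ (Fin n)} {r : ℝ} (hr : 0 < r) :
    Ms y < r ↔ ∀ i, |y i| < r := by
  rw [Ms, pi_norm_lt_iff hr]
  simp [Real.norm_eq_abs]

lemma Hs_le_Ms (i₀ : Fin n) (y : EuclideanSpace ℝ (Fin n)) : Hs i₀ y ≤ Ms y := by
  refine Hs_le (Ms_nonneg y) fun i _ => abs_le_Ms y i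

lemma Ms_eq_max (i₀ : Fin n) (y : EuclideanSpace ℝ (Fin n)) :
    Ms y = max (Hs i₀ y) |y i₀| := by
  apply le_antisymm
  · refine Ms_le (le_max_of_le_right (abs_nonneg _)) fun i => ?_
    by_cases hi : i = i₀
    · subst hi; exact le_max_right _ _
    · exact le_trans (abs_le_Hs y hi) (le_max_left _ _)
  · exact max_le (Hs_le_Ms i₀ y) (abs_le_Ms y i₀)

lemma Ms_smul (c : ℝ) (y : EuclideanSpace ℝ (Fin n)) : Ms (c • y) = |c| * Ms y := by
  have : (fun i => (c • y) i : Fin n → ℝ) = c • (fun i => y i : Fin n → ℝ) := rfl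
  rw [Ms, this, norm_smul, Ms]
  simp [Real.norm_eq_abs]

lemma Ms_continuous : Continuous (Ms (n := n)) := by
  apply continuous_norm.comp
  exact continuous_pi fun i => (continuous_apply i).comp (PiLp.continuous_ofLp 2 (fun _ : Fin n => ℝ))

lemma Hs_continuous (i₀ : Fin n) : Continuous (Hs i₀) := by
  apply continuous_norm.comp
  refine continuous_pi fun i => ?_
  by_cases hi : i = i₀ <;> simp [hi]
  · exact continuous_const
  · exact (continuous_apply i).comp (PiLp.continuous_ofLp 2 (fun _ : Fin n => ℝ))

lemma eq_zero_of_Hs_eq_zero {i₀ : Fin n} {y : EuclideanSpace ℝ (Fin n)}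
    (h : Hs i₀ y = 0) {i : Fin n} (hi : i ≠ i₀) : y i = 0 := by
  have := abs_le_Hs y hi
  rw [h] at this
  exact abs_eq_zero.mp (le_antisymm this (abs_nonneg _))

lemma norm_le_sqrt_mul_Ms (y : EuclideanSpace ℝ (Fin n)) :
    ‖y‖ ≤ Real.sqrt n * Ms y := by
  rw [EuclideanSpace.norm_eq]
  have h1 : (∑ i, ‖y i‖ ^ 2) ≤ (n : ℝ) * (Ms y) ^ 2 := by
    calc (∑ i, ‖y i‖ ^ 2) ≤ ∑ _i : Fin n, (Ms y) ^ 2 := by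
          refine Finset.sum_le_sum fun i _ => ?_
          have := abs_le_Ms y i
          have h0 := abs_nonneg (y i)
          rw [Real.norm_eq_abs]
          nlinarith
      _ = (n : ℝ) * (Ms y) ^ 2 := by simp [mul_comm]
  calc Real.sqrt (∑ i, ‖y i‖ ^ 2) ≤ Real.sqrt ((n : ℝ) * (Ms y) ^ 2) := Real.sqrt_le_sqrt h1
    _ = Real.sqrt n * Ms y := by
        rw [Real.sqrt_mul (Nat.cast_nonneg n), Real.sqrt_sq (Ms_nonneg y)]

lemma Ms_le_norm (y : EuclideanSpace ℝ (Fin n)) : Ms y ≤ ‖y‖ := by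
  refine Ms_le (norm_nonneg y) fun i => ?_
  have h : |y i| = Real.sqrt (‖y i‖ ^ 2) := by
    rw [Real.sqrt_sq_eq_abs, Real.norm_eq_abs, abs_abs]
  rw [h, EuclideanSpace.norm_eq]
  apply Real.sqrt_le_sqrt
  exact Finset.single_le_sum (f := fun i => ‖y i‖ ^ 2) (fun i _ => sq_nonneg _) (Finset.mem_univ i)


noncomputable def cmu (b r : ℝ) : ℝ := (b + (1 - b) * r)⁻¹

noncomputable def cr (i₀ : Fin n) (y : EuclideanSpace ℝ (Fin n)) : ℝ :=
  Hs i₀ y / max (y i₀) (Hs i₀ y)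

noncomputable def cmap (i₀ : Fin n) (b : ℝ) (y : EuclideanSpace ℝ (Fin n)) :
    EuclideanSpace ℝ (Fin n) :=
  WithLp.toLp 2 (fun i => if i = i₀ then y i₀ else cmu b (cr i₀ y) * y i)

variable {i₀ : Fin n} {b : ℝ}

lemma cr_nonneg (y : EuclideanSpace ℝ (Fin n)) : 0 ≤ cr i₀ y := by
  apply div_nonneg (norm_nonneg _)
  exact le_trans (norm_nonneg _) (le_max_right _ _)

lemma cr_le_one (y : EuclideanSpace ℝ (Fin n)) : cr i₀ y ≤ 1 := by
  rcases le_or_gt (max (y i₀) (Hs i₀ y)) 0 with h | h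
  · have h0 : Hs i₀ y = 0 := le_antisymm (le_trans (le_max_right _ _) h) (norm_nonneg _)
    rw [cr, h0, zero_div]; norm_num
  · rw [cr, div_le_one h]
    exact le_max_right _ _

lemma cden_pos (hb : 0 < b) {r : ℝ} (h0 : 0 ≤ r) (h1 : r ≤ 1) : 0 < b + (1 - b) * r := by
  rcases eq_or_lt_of_le h0 with h | h
  · nlinarith
  · nlinarith [mul_nonneg (le_of_lt hb) (sub_nonneg.mpr h1)]

lemma cmu_pos (hb : 0 < b) {r : ℝ} (h0 : 0 ≤ r) (h1 : r ≤ 1) : 0 < cmu b r :=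
  inv_pos.mpr (cden_pos hb h0 h1)

lemma cmu_le (hb : 0 < b) {r : ℝ} (h0 : 0 ≤ r) (h1 : r ≤ 1) : cmu b r ≤ (min b 1)⁻¹ := by
  have hmin : 0 < min b 1 := lt_min hb one_pos
  rw [cmu]
  apply inv_anti₀ hmin
  rcases le_total b 1 with h | h
  · rw [min_eq_left h]; nlinarith
  · rw [min_eq_right h]; nlinarith

lemma cmu_one : cmu b 1 = 1 := by rw [cmu]; ring_nf

lemma lam_le_one (hb : 0 < b) {r : ℝ} (h0 : 0 ≤ r) (h1 : r ≤ 1) : cmu b r * r ≤ 1 := by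
  have hd := cden_pos hb h0 h1
  rw [cmu, inv_mul_le_iff₀ hd]
  nlinarith

lemma lam_lt_one (hb : 0 < b) {r : ℝ} (h0 : 0 ≤ r) (h1 : r < 1) : cmu b r * r < 1 := by
  have hd := cden_pos hb h0 h1.le
  rw [cmu, inv_mul_lt_iff₀ hd]
  nlinarith

lemma cmap_apply_ne (y : EuclideanSpace ℝ (Fin n)) {i : Fin n} (hi : i ≠ i₀) :
    cmap i₀ b y i = cmu b (cr i₀ y) * y i := by simp [cmap, hi]

lemma cmap_apply_i₀ (y : EuclideanSpace ℝ (Fin n)) : cmap i₀ b y i₀ = y i₀ := by simp [cmap]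

lemma cmap_eq_self_of_Hs0 {y : EuclideanSpace ℝ (Fin n)} (h : Hs i₀ y = 0) :
    cmap i₀ b y = y := by
  ext i
  by_cases hi : i = i₀
  · subst hi; simp [cmap]
  · rw [cmap_apply_ne y hi, eq_zero_of_Hs_eq_zero h hi, mul_zero]

lemma cmap_eq_self_of_le {y : EuclideanSpace ℝ (Fin n)} (h : y i₀ ≤ Hs i₀ y) :
    cmap i₀ b y = y := by
  rcases eq_or_lt_of_le (Hs_nonneg i₀ y) with h0 | h0
  · exact cmap_eq_self_of_Hs0 h0.symm
  · have hr : cr i₀ y = 1 := by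
      rw [cr, max_eq_right h, div_self (ne_of_gt h0)]
    ext i
    by_cases hi : i = i₀
    · subst hi; simp [cmap]
    · rw [cmap_apply_ne y hi, hr, cmu_one, one_mul]

/-- in the cone case, the basic quantities -/
lemma cr_cone {y : EuclideanSpace ℝ (Fin n)} (h : Hs i₀ y < y i₀) :
    cr i₀ y = Hs i₀ y / y i₀ := by rw [cr, max_eq_left h.le]

lemma Hs_cmap (hb : 0 < b) (y : EuclideanSpace ℝ (Fin n)) :
    Hs i₀ (cmap i₀ b y) = cmu b (cr i₀ y) * Hs i₀ y := by
  have hmu : 0 ≤ cmu b (cr i₀ y) := (cmu_pos hb (cr_nonneg y) (cr_le_one y)).le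
  have : (fun i => if i = i₀ then 0 else (cmap i₀ b y) i : Fin n → ℝ)
      = cmu b (cr i₀ y) • (fun i => if i = i₀ then 0 else y i : Fin n → ℝ) := by
    funext i
    by_cases hi : i = i₀ <;> simp [hi, cmap]
  rw [Hs, this, norm_smul, Real.norm_eq_abs, abs_of_nonneg hmu, Hs]

lemma cmap_i₀_pos_of_cone {y : EuclideanSpace ℝ (Fin n)} (h : Hs i₀ y < y i₀) : 0 < y i₀ :=
  lt_of_le_of_lt (Hs_nonneg i₀ y) h

/-- in the cone, the Hs of the image stays below `y i₀` -/
lemma Hs_cmap_lt (hb : 0 < b) {y : EuclideanSpace ℝ (Fin n)} (h : Hs i₀ y < y i₀) :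
    Hs i₀ (cmap i₀ b y) < y i₀ := by
  have hy0 := cmap_i₀_pos_of_cone h
  have hr0 := cr_nonneg (i₀ := i₀) y
  have hr1 : cr i₀ y < 1 := by
    rw [cr_cone h]; exact (div_lt_one hy0).mpr h
  have h1 : cmu b (cr i₀ y) * cr i₀ y < 1 := lam_lt_one hb hr0 hr1
  have hHseq : Hs i₀ y = cr i₀ y * y i₀ := by
    rw [cr_cone h]; field_simp
  rw [Hs_cmap hb y, hHseq, ← mul_assoc]
  calc (cmu b (cr i₀ y) * cr i₀ y) * y i₀ < 1 * y i₀ := mul_lt_mul_of_pos_right h1 hy0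
    _ = y i₀ := one_mul _

lemma Ms_cmap (hb : 0 < b) (y : EuclideanSpace ℝ (Fin n)) :
    Ms (cmap i₀ b y) = Ms y := by
  rcases le_or_gt (y i₀) (Hs i₀ y) with h | h
  · rw [cmap_eq_self_of_le h]
  · have hy0 := cmap_i₀_pos_of_cone h
    have h2 := Hs_cmap_lt hb h
    rw [Ms_eq_max i₀, Ms_eq_max i₀ y, cmap_apply_i₀,
      max_eq_right (a := Hs i₀ (cmap i₀ b y)), max_eq_right (a := Hs i₀ y)]
    · rw [abs_of_pos hy0]; exact h.le
    · rw [abs_of_pos hy0]; exact h2.le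

/-- key algebraic identity for the composition -/
lemma cmu_comp (hb : 0 < b) {r : ℝ} (h0 : 0 ≤ r) (h1 : r ≤ 1) :
    cmu b (cmu b⁻¹ r * r) * cmu b⁻¹ r = 1 := by
  have hb' : 0 < b⁻¹ := inv_pos.mpr hb
  have hd1 : 0 < b⁻¹ + (1 - b⁻¹) * r := cden_pos hb' h0 h1
  have hbne : b ≠ 0 := ne_of_gt hb
  have hdne : (b⁻¹ + (1 - b⁻¹) * r) ≠ 0 := ne_of_gt hd1
  have hbd : b * (b⁻¹ + (1 - b⁻¹) * r) = 1 + (b - 1) * r := by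
    field_simp
  have h2 : (b⁻¹ + (1 - b⁻¹) * r) * (b + (1 - b) * ((b⁻¹ + (1 - b⁻¹) * r)⁻¹ * r)) = 1 := by
    have expand : (b⁻¹ + (1 - b⁻¹) * r) * (b + (1 - b) * ((b⁻¹ + (1 - b⁻¹) * r)⁻¹ * r))
        = b * (b⁻¹ + (1 - b⁻¹) * r) + (1 - b) * r * ((b⁻¹ + (1 - b⁻¹) * r) * (b⁻¹ + (1 - b⁻¹) * r)⁻¹) := by
      ring
    rw [expand, mul_inv_cancel₀ hdne, hbd]
    ring
  rw [cmu, cmu, ← mul_inv_rev, h2, inv_one]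

lemma ccomp (hb : 0 < b) (y : EuclideanSpace ℝ (Fin n)) :
    cmap i₀ b (cmap i₀ b⁻¹ y) = y := by
  have hb' : 0 < b⁻¹ := inv_pos.mpr hb
  rcases eq_or_lt_of_le (Hs_nonneg i₀ y) with h0 | h0
  · rw [cmap_eq_self_of_Hs0 h0.symm, cmap_eq_self_of_Hs0 h0.symm]
  rcases le_or_gt (y i₀) (Hs i₀ y) with h | h
  · rw [cmap_eq_self_of_le h, cmap_eq_self_of_le h]
  · -- cone case
    set w := cmap i₀ b⁻¹ y with hw
    have hy0 := cmap_i₀_pos_of_cone h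
    have hwi₀ : w i₀ = y i₀ := cmap_apply_i₀ y
    have hHsw : Hs i₀ w = cmu b⁻¹ (cr i₀ y) * Hs i₀ y := Hs_cmap hb' y
    have hconew : Hs i₀ w < w i₀ := by rw [hwi₀]; exact Hs_cmap_lt hb' h
    have hrw : cr i₀ w = cmu b⁻¹ (cr i₀ y) * cr i₀ y := by
      rw [cr_cone hconew, hwi₀, hHsw, cr_cone h]
      field_simp
    ext i
    by_cases hi : i = i₀
    · subst hi; rw [cmap_apply_i₀, hwi₀]
    · rw [cmap_apply_ne w hi, hrw, hw, cmap_apply_ne y hi, ← mul_assoc,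
        cmu_comp hb (cr_nonneg y) (cr_le_one y), one_mul]

lemma cr_continuousAt {y₀ : EuclideanSpace ℝ (Fin n)}
    (h : 0 < max (y₀ i₀) (Hs i₀ y₀)) : ContinuousAt (cr i₀) y₀ := by
  apply ContinuousAt.div
  · exact (Hs_continuous i₀).continuousAt
  · exact ((continuous_apply i₀).comp
      (PiLp.continuous_ofLp 2 (fun _ : Fin n => ℝ))).continuousAt.max
      (Hs_continuous i₀).continuousAt
  · exact ne_of_gt h

lemma cmap_continuous (hb : 0 < b) : Continuous (cmap i₀ b) := by
  have happly : ∀ i : Fin n, Continuous fun y : EuclideanSpace ℝ (Fin n) => y i := fun i =>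
    (continuous_apply i).comp (PiLp.continuous_ofLp 2 (fun _ : Fin n => ℝ))
  apply (PiLp.continuous_toLp 2 (fun _ : Fin n => ℝ)).comp
  refine continuous_pi fun i => ?_
  by_cases hi : i = i₀
  · have hfun : (fun y : EuclideanSpace ℝ (Fin n) => cmap i₀ b y i) = fun y => y i₀ := by
      funext y; rw [hi, cmap_apply_i₀]
    show Continuous fun y : EuclideanSpace ℝ (Fin n) => cmap i₀ b y i
    rw [hfun]; exact happly i₀
  · have hfun : (fun y => cmap i₀ b y i) = fun y => cmu b (cr i₀ y) * y i := by
      funext y; exact cmap_apply_ne y hi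
    rw [continuous_iff_continuousAt]
    intro y₀
    show ContinuousAt (fun y => cmap i₀ b y i) y₀
    rw [hfun]
    rcases lt_or_ge 0 (max (y₀ i₀) (Hs i₀ y₀)) with h | h
    · apply ContinuousAt.mul
      · apply ContinuousAt.inv₀
        · exact (continuousAt_const.add (continuousAt_const.mul (cr_continuousAt h)))
        · exact ne_of_gt (cden_pos hb (cr_nonneg y₀) (cr_le_one y₀))
      · exact (happly i).continuousAt
    · -- degenerate point: y₀ i = 0, squeeze
      have hH0 : Hs i₀ y₀ = 0 :=
        le_antisymm (le_trans (le_max_right _ _) h) (Hs_nonneg i₀ y₀)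
      have hyi : y₀ i = 0 := eq_zero_of_Hs_eq_zero hH0 hi
      have hval : (fun y : EuclideanSpace ℝ (Fin n) => cmu b (cr i₀ y) * y i) y₀ = 0 := by
        simp [hyi]
      unfold ContinuousAt
      rw [hval]
      have hbound : ∀ y : EuclideanSpace ℝ (Fin n),
          ‖cmu b (cr i₀ y) * y i‖ ≤ (min b 1)⁻¹ * |y i| := by
        intro y
        rw [norm_mul, Real.norm_eq_abs, Real.norm_eq_abs,
          abs_of_pos (cmu_pos hb (cr_nonneg y) (cr_le_one y))]
        exact mul_le_mul_of_nonneg_right (cmu_le hb (cr_nonneg y) (cr_le_one y)) (abs_nonneg _)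
      apply squeeze_zero_norm hbound
      have : Filter.Tendsto (fun y : EuclideanSpace ℝ (Fin n) => (min b 1)⁻¹ * |y i|)
          (nhds y₀) (nhds ((min b 1)⁻¹ * |y₀ i|)) :=
        (continuous_const.mul ((happly i).abs)).tendsto y₀
      rw [hyi] at this
      simpa using this

/-- the cone homeomorphism -/
noncomputable def coneHomeo (i₀ : Fin n) (b : ℝ) (hb : 0 < b) :
    EuclideanSpace ℝ (Fin n) ≃ₜ EuclideanSpace ℝ (Fin n) where
  toFun := cmap i₀ b
  invFun := cmap i₀ b⁻¹
  left_inv := fun y => by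
    have := ccomp (i₀ := i₀) (inv_pos.mpr hb) (y := y)
    rwa [inv_inv] at this
  right_inv := fun y => ccomp hb y
  continuous_toFun := cmap_continuous hb
  continuous_invFun := cmap_continuous (inv_pos.mpr hb)

/-! ### the radial compression -/

noncomputable def rf (t m : ℝ) : ℝ := if m ≤ 1 then 1 + t else (1 + t + t * (m - 1)) / max 1 m

noncomputable def rg (t m : ℝ) : ℝ :=
  if m ≤ 1 + t then (1 + t)⁻¹ else (1 + (m - 1 - t) / t) / max 1 m

noncomputable def rmap (t : ℝ) (y : EuclideanSpace ℝ (Fin n)) : EuclideanSpace ℝ (Fin n) :=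
  rf t (Ms y) • y

noncomputable def rinv (t : ℝ) (y : EuclideanSpace ℝ (Fin n)) : EuclideanSpace ℝ (Fin n) :=
  rg t (Ms y) • y

variable {t : ℝ}

lemma rf_pos (ht : 0 < t) (m : ℝ) : 0 < rf t m := by
  rw [rf]
  split_ifs with h
  · linarith
  · push_neg at h
    apply div_pos (by nlinarith) (lt_of_lt_of_le one_pos (le_max_left 1 m))

lemma rg_pos (ht : 0 < t) (m : ℝ) : 0 < rg t m := by
  rw [rg]
  split_ifs with h
  · positivity
  · push_neg at h
    have h1 : (1:ℝ) < m := by linarith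
    apply div_pos
    · have : 0 < (m - 1 - t) / t := div_pos (by linarith) ht
      linarith
    · exact lt_of_lt_of_le one_pos (le_max_left 1 m)

lemma Ms_rmap (ht : 0 < t) (y : EuclideanSpace ℝ (Fin n)) :
    Ms (rmap t y) = rf t (Ms y) * Ms y := by
  rw [rmap, Ms_smul, abs_of_pos (rf_pos ht _)]

lemma Ms_rinv (ht : 0 < t) (y : EuclideanSpace ℝ (Fin n)) :
    Ms (rinv t y) = rg t (Ms y) * Ms y := by
  rw [rinv, Ms_smul, abs_of_pos (rg_pos ht _)]

lemma rf_continuous (ht : 0 < t) : Continuous fun m : ℝ => rf t m := by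
  unfold rf
  apply Continuous.if_le
  · exact continuous_const
  · apply Continuous.div
    · exact continuous_const.add (continuous_const.mul (continuous_id.sub continuous_const))
    · exact continuous_const.max continuous_id
    · intro x; exact ne_of_gt (lt_of_lt_of_le one_pos (le_max_left 1 x))
  · exact continuous_id
  · exact continuous_const
  · intro x hx; rw [hx]; norm_num

lemma rg_continuous (ht : 0 < t) : Continuous fun m : ℝ => rg t m := by
  unfold rg
  apply Continuous.if_le
  · exact continuous_const
  · apply Continuous.div
    · exact continuous_const.add (((continuous_id.sub continuous_const).sub continuous_const).div_const t)
    · exact continuous_const.max continuous_id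
    · intro x; exact ne_of_gt (lt_of_lt_of_le one_pos (le_max_left 1 x))
  · exact continuous_id
  · exact continuous_const
  · intro x hx
    rw [hx, max_eq_right (by linarith : (1:ℝ) ≤ 1 + t)]
    rw [show (1 + t - 1 - t) / t = 0 from by rw [show 1 + t - 1 - t = 0 from by ring, zero_div]]
    rw [eq_div_iff (by linarith : (1:ℝ) + t ≠ 0), inv_mul_cancel₀ (by linarith : (1:ℝ) + t ≠ 0)]
    norm_num

lemma rmap_continuous (ht : 0 < t) : Continuous (rmap (n := n) t) :=
  ((rf_continuous ht).comp Ms_continuous).smul continuous_id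

lemma rinv_continuous (ht : 0 < t) : Continuous (rinv (n := n) t) :=
  ((rg_continuous ht).comp Ms_continuous).smul continuous_id

lemma rinv_rmap (ht : 0 < t) (y : EuclideanSpace ℝ (Fin n)) : rinv t (rmap t y) = y := by
  have hm0 := Ms_nonneg y
  have h1t : (0:ℝ) < 1 + t := by linarith
  rcases le_or_gt (Ms y) 1 with hm | hm
  · have hrf : rf t (Ms y) = 1 + t := if_pos hm
    have hMs : Ms (rmap t y) = (1 + t) * Ms y := by rw [Ms_rmap ht, hrf]
    have hle : Ms (rmap t y) ≤ 1 + t := by rw [hMs]; nlinarith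
    rw [rinv, hMs]
    rw [show rg t ((1 + t) * Ms y) = (1 + t)⁻¹ from if_pos (by rw [← hMs]; exact hle)]
    rw [rmap, hrf, smul_smul, inv_mul_cancel₀ (ne_of_gt h1t), one_smul]
  · have hmax : max 1 (Ms y) = Ms y := max_eq_right hm.le
    have hrf : rf t (Ms y) = (1 + t + t * (Ms y - 1)) / Ms y := by
      rw [rf, if_neg (not_le.mpr hm), hmax]
    have hm0' : (0:ℝ) < Ms y := lt_trans one_pos hm
    have hMs : Ms (rmap t y) = 1 + t + t * (Ms y - 1) := by
      rw [Ms_rmap ht, hrf, div_mul_cancel₀ _ (ne_of_gt hm0')]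
    have hgt : 1 + t < Ms (rmap t y) := by rw [hMs]; nlinarith
    have hmax2 : max 1 (Ms (rmap t y)) = Ms (rmap t y) := max_eq_right (by linarith)
    have hrg : rg t (Ms (rmap t y)) = Ms y / Ms (rmap t y) := by
      rw [rg, if_neg (not_le.mpr hgt), hmax2, hMs]
      congr 1
      field_simp
      ring
    have hA : (0:ℝ) < 1 + t + t * (Ms y - 1) := by nlinarith
    have hsc : Ms y / Ms (rmap t y) * rf t (Ms y) = 1 := by
      rw [hMs, hrf]
      field_simp
    calc rinv t (rmap t y) = (Ms y / Ms (rmap t y) * rf t (Ms y)) • y := by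
          rw [rinv, hrg, rmap, smul_smul]
      _ = y := by rw [hsc, one_smul]

lemma rmap_rinv (ht : 0 < t) (y : EuclideanSpace ℝ (Fin n)) : rmap t (rinv t y) = y := by
  have hm0 := Ms_nonneg y
  have h1t : (0:ℝ) < 1 + t := by linarith
  rcases le_or_gt (Ms y) (1 + t) with hm | hm
  · have hrg : rg t (Ms y) = (1 + t)⁻¹ := if_pos hm
    have hMs : Ms (rinv t y) = (1 + t)⁻¹ * Ms y := by rw [Ms_rinv ht, hrg]
    have hle : Ms (rinv t y) ≤ 1 := by
      rw [hMs, inv_mul_le_iff₀ h1t, mul_one]; exact hm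
    rw [rmap, hMs, show rf t ((1 + t)⁻¹ * Ms y) = 1 + t from if_pos (by rw [← hMs]; exact hle)]
    rw [rinv, hrg, smul_smul, mul_inv_cancel₀ (ne_of_gt h1t), one_smul]
  · have hm1 : (1:ℝ) < Ms y := by linarith
    have hm0' : (0:ℝ) < Ms y := by linarith
    have hrg : rg t (Ms y) = (1 + (Ms y - 1 - t) / t) / Ms y := by
      rw [rg, if_neg (not_le.mpr hm), max_eq_right hm1.le]
    have hB : (0:ℝ) < 1 + (Ms y - 1 - t) / t := by
      have : 0 < (Ms y - 1 - t) / t := div_pos (by linarith) ht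
      linarith
    have hMs : Ms (rinv t y) = 1 + (Ms y - 1 - t) / t := by
      rw [Ms_rinv ht, hrg, div_mul_cancel₀ _ (ne_of_gt hm0')]
    have hgt : 1 < Ms (rinv t y) := by
      rw [hMs]
      have : 0 < (Ms y - 1 - t) / t := div_pos (by linarith) ht
      linarith
    have hrf : rf t (Ms (rinv t y)) = Ms y / Ms (rinv t y) := by
      rw [rf, if_neg (not_le.mpr hgt), max_eq_right hgt.le, hMs]
      congr 1
      field_simp
      ring
    have hsc : Ms y / Ms (rinv t y) * rg t (Ms y) = 1 := by
      have hne : Ms y - 1 ≠ 0 := ne_of_gt (by linarith)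
      rw [hMs, hrg]
      field_simp
      ring_nf
      rw [← sub_one_mul, show Ms y - 1 = -1 + Ms y by ring]
      exact mul_inv_cancel₀ (by intro h; apply hne; linarith)
    calc rmap t (rinv t y) = (Ms y / Ms (rinv t y) * rg t (Ms y)) • y := by
          rw [rmap, hrf, rinv, smul_smul]
      _ = y := by rw [hsc, one_smul]

/-- the radial homeomorphism -/
noncomputable def radHomeo (t : ℝ) (ht : 0 < t) :
    EuclideanSpace ℝ (Fin n) ≃ₜ EuclideanSpace ℝ (Fin n) where
  toFun := rmap t
  invFun := rinv t
  left_inv := rinv_rmap ht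
  right_inv := rmap_rinv ht
  continuous_toFun := rmap_continuous ht
  continuous_invFun := rinv_continuous ht

/-! ### the cubes -/

def lastIdx (N : ℕ) (h : 0 < N) : Fin N := ⟨N - 1, Nat.sub_lt h one_pos⟩

noncomputable def cZero (N : ℕ) (h : 0 < N) : EuclideanSpace ℝ (Fin N) :=
  WithLp.toLp 2 (fun i => if i = lastIdx N h then (-1 : ℝ) else 0)

variable {N : ℕ}

lemma idx_iff (h : 0 < N) (i : Fin N) : ((i : ℕ) = N - 1) ↔ i = lastIdx N h := by
  rw [Fin.ext_iff]
  exact Iff.rfl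

lemma cZero_apply_last (h : 0 < N) : cZero N h (lastIdx N h) = -1 := by simp [cZero]

lemma cZero_apply_ne (h : 0 < N) {i : Fin N} (hi : i ≠ lastIdx N h) : cZero N h i = 0 := by
  simp [cZero, hi]

lemma mem_cubeW_iff (h : 0 < N) (x : EuclideanSpace ℝ (Fin N)) :
    x ∈ cubeW N ↔ ∀ i, |x i - cZero N h i| ≤ 1 := by
  rw [cubeW, Set.mem_preimage, Set.mem_univ_pi]
  apply forall_congr'
  intro i
  by_cases hi : i = lastIdx N h
  · rw [if_pos ((idx_iff h i).mpr hi), hi, cZero_apply_last h, Set.mem_Icc, abs_le]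
    constructor <;> intro h' <;> constructor <;> linarith [h'.1, h'.2]
  · rw [if_neg (fun hc => hi ((idx_iff h i).mp hc)), cZero_apply_ne h hi, Set.mem_Icc, abs_le]
    constructor <;> intro h' <;> constructor <;> linarith [h'.1, h'.2]

lemma mem_cubeW_iff_Ms (h : 0 < N) (x : EuclideanSpace ℝ (Fin N)) :
    x ∈ cubeW N ↔ Ms (x - cZero N h) ≤ 1 := by
  rw [mem_cubeW_iff h]
  constructor
  · intro h'
    exact Ms_le zero_le_one fun i => h' i
  · intro h' i
    exact le_trans (abs_le_Ms (x - cZero N h) i) h'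

lemma interior_cubeW (h : 0 < N) :
    interior (cubeW N) = {x | Ms (x - cZero N h) < 1} := by
  show interior ((PiLp.homeomorph 2 (fun _ : Fin N => ℝ)) ⁻¹' _) = _
  rw [← Homeomorph.preimage_interior, interior_pi_set Set.finite_univ]
  ext x
  simp only [Set.mem_preimage, Set.mem_univ_pi, Set.mem_setOf_eq]
  have hiff : ∀ i : Fin N, x i ∈ interior (if (i : ℕ) = N - 1
      then Set.Icc (-2 : ℝ) 0 else Set.Icc (-1) 1) ↔ |x i - cZero N h i| < 1 := by
    intro i
    by_cases hi : i = lastIdx N h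
    · rw [if_pos ((idx_iff h i).mpr hi), hi, cZero_apply_last h, interior_Icc,
        Set.mem_Ioo, abs_lt]
      constructor <;> intro h' <;> constructor <;> linarith [h'.1, h'.2]
    · rw [if_neg (fun hc => hi ((idx_iff h i).mp hc)), cZero_apply_ne h hi, interior_Icc,
        Set.mem_Ioo, abs_lt]
      constructor <;> intro h' <;> constructor <;> linarith [h'.1, h'.2]
  constructor
  · intro h'
    show Ms _ < 1
    rw [Ms_lt_iff one_pos]
    intro i
    simpa using (hiff i).mp (h' i)
  · intro h' i
    have h'' : Ms ((show EuclideanSpace ℝ (Fin N) from x) - cZero N h) < 1 := h'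
    rw [Ms_lt_iff one_pos] at h''
    refine (hiff i).mpr ?_
    simpa using h'' i

lemma isClosed_cubeW : IsClosed (cubeW N) := by
  apply IsClosed.preimage (PiLp.continuous_ofLp 2 _)
  apply isClosed_set_pi
  intro i _
  split_ifs <;> exact isClosed_Icc

lemma frontier_cubeW (h : 0 < N) :
    frontier (cubeW N) = {x | Ms (x - cZero N h) = 1} := by
  rw [isClosed_cubeW.frontier_eq, interior_cubeW h]
  ext x
  simp only [Set.mem_diff, mem_cubeW_iff_Ms h, Set.mem_setOf_eq]
  constructor
  · rintro ⟨h1, h2⟩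
    exact le_antisymm h1 (not_lt.mp h2)
  · intro h1
    rw [h1]
    exact ⟨le_refl 1, by norm_num⟩

/-- points with `Ms (w - c₀) > 1` are in the exterior of the frontier sphere -/
lemma mem_sphereExt_of (h : 0 < N) {w : EuclideanSpace ℝ (Fin N)}
    (hw : 1 < Ms (w - cZero N h)) :
    w ∉ frontier (cubeW N) ∧
      ¬ Bornology.IsBounded (connectedComponentIn (frontier (cubeW N))ᶜ w) := by
  set c₀ := cZero N h
  have hwf : w ∉ frontier (cubeW N) := by
    rw [frontier_cubeW h]
    intro hmem
    rw [Set.mem_setOf_eq] at hmem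
    rw [hmem] at hw
    exact lt_irrefl 1 hw
  refine ⟨hwf, ?_⟩
  set γ : ℝ → EuclideanSpace ℝ (Fin N) := fun τ => w + τ • (w - c₀) with hγ
  have hγc : Continuous γ := continuous_const.add (continuous_id.smul continuous_const)
  have hγsub : ∀ τ, γ τ - c₀ = (1 + τ) • (w - c₀) := by
    intro τ
    rw [hγ, add_smul, one_smul]
    show w + τ • (w - c₀) - c₀ = w - c₀ + τ • (w - c₀)
    exact add_sub_right_comm _ _ _
  set K : Set (EuclideanSpace ℝ (Fin N)) := γ '' (Set.Ici 0) with hK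
  have hKconn : IsPreconnected K := isPreconnected_Ici.image γ hγc.continuousOn
  have hKsub : K ⊆ (frontier (cubeW N))ᶜ := by
    rintro _ ⟨τ, hτ, rfl⟩
    rw [Set.mem_compl_iff, frontier_cubeW h, Set.mem_setOf_eq, hγsub τ, Ms_smul,
      abs_of_pos (by linarith [Set.mem_Ici.mp hτ] : (0:ℝ) < 1 + τ)]
    intro heq
    nlinarith [Set.mem_Ici.mp hτ]
  have hwK : w ∈ K := ⟨0, Set.self_mem_Ici, by rw [hγ]; simp⟩
  have hKcomp : K ⊆ connectedComponentIn (frontier (cubeW N))ᶜ w :=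
    hKconn.subset_connectedComponentIn hwK hKsub
  intro hbd
  have hKbd : Bornology.IsBounded K := hbd.subset hKcomp
  obtain ⟨C, hC⟩ := hKbd.exists_norm_le
  set τ₀ : ℝ := |C| + ‖c₀‖ + 1 with hτ₀
  have hτ₀0 : (0:ℝ) ≤ τ₀ := by positivity
  have hmem : γ τ₀ ∈ K := ⟨τ₀, Set.mem_Ici.mpr hτ₀0, rfl⟩
  have h1 : ‖γ τ₀‖ ≤ C := hC _ hmem
  have h2 : ‖γ τ₀ - c₀‖ ≤ ‖γ τ₀‖ + ‖c₀‖ := norm_sub_le _ _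
  have h3 : Ms (γ τ₀ - c₀) ≤ ‖γ τ₀ - c₀‖ := Ms_le_norm _
  have h4 : Ms (γ τ₀ - c₀) = (1 + τ₀) * Ms (w - c₀) := by
    rw [hγsub, Ms_smul, abs_of_pos (by linarith : (0:ℝ) < 1 + τ₀)]
  have h5 : (1 + τ₀) ≤ (1 + τ₀) * Ms (w - c₀) := by nlinarith
  have hCabs : C ≤ |C| := le_abs_self C
  linarith

end Stmt7Aux


set_option maxHeartbeats 2000000 in
theorem stmt7 {N : ℕ} (hN : 4 ≤ N)
    (F : EuclideanSpace ℝ (Fin N) → EuclideanSpace ℝ (Fin N))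
    (hFemb : Topology.IsEmbedding fun x : cubeW N => F x)
    (hFfix : ∀ x ∈ frontier (cubeW N) \ cubeP N, F x = x)
    (hFP : F '' cubeP N ⊆ cubeQ N)
    (Sg : Set (EuclideanSpace ℝ (Fin N))) (hSg : Sg = F '' frontier (cubeW N))
    (ε : ℝ) (hε : 0 < ε) :
    ∃ ψ : frontier (cubeW N) → EuclideanSpace ℝ (Fin N), Topology.IsEmbedding ψ ∧
      (∀ x : frontier (cubeW N), dist (x : EuclideanSpace ℝ (Fin N)) (ψ x) ≤ ε) ∧
      Set.range ψ ⊆ sphereExt (frontier (cubeW N)) ∧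
      AmbHomeo (Set.range ψ) Sg := by

  classical
  have h0 : 0 < N := by omega
  set i₀ : Fin N := Stmt7Aux.lastIdx N h0 with hi₀def
  set c₀ : EuclideanSpace ℝ (Fin N) := Stmt7Aux.cZero N h0 with hc₀def
  have hc₀last : c₀ i₀ = -1 := Stmt7Aux.cZero_apply_last h0
  have hc₀ne : ∀ i : Fin N, i ≠ i₀ → c₀ i = 0 := fun i hi => Stmt7Aux.cZero_apply_ne h0 hi
  -- parameters
  set s : ℝ := Real.sqrt N with hsdef
  have hs0 : (0:ℝ) ≤ s := Real.sqrt_nonneg _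
  set δ : ℝ := ε / (16 * (s + 1)) with hδdef
  have hδ0 : 0 < δ := div_pos hε (by nlinarith)
  have hsδ : s * δ ≤ ε / 16 := by
    have h16 : (0:ℝ) < 16*(s+1) := by nlinarith
    have heq : s * (ε / (16 * (s + 1))) = (s*ε)/(16*(s+1)) := by ring
    rw [hδdef, heq, div_le_div_iff₀ h16 (by norm_num : (0:ℝ) < 16)]
    nlinarith [hε.le, hs0, mul_nonneg hs0 hε.le]
  set β : ℝ := min (1/4) δ with hβdef
  have hβ0 : 0 < β := lt_min (by norm_num) hδ0
  have hβ4 : β ≤ 1/4 := min_le_left _ _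
  have hβδ : β ≤ δ := min_le_right _ _
  set t : ℝ := min 1 δ with htdef
  have ht0 : 0 < t := lt_min one_pos hδ0
  have ht1 : t ≤ 1 := min_le_left _ _
  have htδ : t ≤ δ := min_le_right _ _
  set a : ℝ := β⁻¹ - 1 with hadef
  have hainv : (4:ℝ) ≤ β⁻¹ := by
    have h1 : ((1:ℝ)/4)⁻¹ ≤ β⁻¹ := inv_anti₀ hβ0 hβ4
    norm_num at h1
    linarith
  have ha : 0 < a := by rw [hadef]; linarith
  have ha' : 0 < a⁻¹ := inv_pos.mpr ha
  -- the key compression estimate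
  have hlam : ∀ r : ℝ, 0 ≤ r → r ≤ 1/2 → Stmt7Aux.cmu a r * r ≤ β := by
    intro r hr0 hr2
    have hr1 : r ≤ 1 := by linarith
    have hd := Stmt7Aux.cden_pos ha hr0 hr1
    rw [Stmt7Aux.cmu, inv_mul_le_iff₀ hd]
    have hexp : (a + (1 - a) * r) * β = 1 - β + 2*β*r - r := by
      rw [hadef]
      field_simp
      ring
    rw [hexp]
    nlinarith [mul_nonneg (by linarith : (0:ℝ) ≤ 1 - β) (by linarith : (0:ℝ) ≤ 1 - 2*r)]
  -- the homeomorphisms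
  set Ψ : EuclideanSpace ℝ (Fin N) ≃ₜ EuclideanSpace ℝ (Fin N) :=
    (Homeomorph.subRight c₀).trans ((Stmt7Aux.coneHomeo i₀ a ha).trans
      ((Stmt7Aux.radHomeo t ht0).trans (Homeomorph.addRight c₀))) with hΨdef
  set ρ : EuclideanSpace ℝ (Fin N) ≃ₜ EuclideanSpace ℝ (Fin N) :=
    (Homeomorph.subRight c₀).trans ((Stmt7Aux.coneHomeo i₀ a⁻¹ ha').trans
      (Homeomorph.addRight c₀)) with hρdef
  have hΨap : ∀ x, Ψ x = Stmt7Aux.rmap t (Stmt7Aux.cmap i₀ a (x - c₀)) + c₀ := fun _ => rfl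
  have hρap : ∀ x, ρ x = Stmt7Aux.cmap i₀ a⁻¹ (x - c₀) + c₀ := fun _ => rfl
  have hρsym : ∀ x, ρ.symm x = Stmt7Aux.cmap i₀ (a⁻¹)⁻¹ (x - c₀) + c₀ := fun _ => rfl
  have hMsρ : ∀ x, Stmt7Aux.Ms (ρ x - c₀) = Stmt7Aux.Ms (x - c₀) := by
    intro x
    rw [hρap, add_sub_cancel_right, Stmt7Aux.Ms_cmap ha']
  have hMsρs : ∀ x, Stmt7Aux.Ms (ρ.symm x - c₀) = Stmt7Aux.Ms (x - c₀) := by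
    intro x
    rw [hρsym, add_sub_cancel_right, Stmt7Aux.Ms_cmap (inv_pos.mpr ha')]
  have hcompΨρ : ∀ x, Ψ (ρ x) = Stmt7Aux.rmap t (x - c₀) + c₀ := by
    intro x
    rw [hΨap, hρap, add_sub_cancel_right, Stmt7Aux.ccomp ha]
  -- characterizations of the cubes
  have hfr : frontier (cubeW N) = {x | Stmt7Aux.Ms (x - c₀) = 1} := Stmt7Aux.frontier_cubeW h0
  have hWc : cubeW N = {x | Stmt7Aux.Ms (x - c₀) ≤ 1} :=
    Set.ext fun x => Stmt7Aux.mem_cubeW_iff_Ms h0 x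
  have hPco : ∀ z ∈ cubeP N, z i₀ = 0 ∧ ∀ i, i ≠ i₀ → |z i| ≤ 1/2 := by
    rintro z ⟨hzW, hzQ⟩
    rw [cubeW, Set.mem_preimage, Set.mem_univ_pi] at hzW
    rw [cubeQ, Set.mem_preimage, Set.mem_univ_pi] at hzQ
    have hWi := hzW i₀
    have hQi := hzQ i₀
    rw [if_pos ((Stmt7Aux.idx_iff h0 i₀).mpr rfl), Set.mem_Icc] at hWi hQi
    constructor
    · linarith [hWi.2, hQi.1]
    · intro i hi
      have hQ2 := hzQ i
      rw [if_neg (fun hc => hi ((Stmt7Aux.idx_iff h0 i).mp hc)), Set.mem_Icc] at hQ2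
      rw [abs_le]
      constructor <;> linarith [hQ2.1, hQ2.2]
  have hQco : ∀ z ∈ cubeQ N, (0 ≤ z i₀ ∧ z i₀ ≤ 1) ∧ ∀ i, i ≠ i₀ → |z i| ≤ 1/2 := by
    intro z hzQ
    rw [cubeQ, Set.mem_preimage, Set.mem_univ_pi] at hzQ
    have hQi := hzQ i₀
    rw [if_pos ((Stmt7Aux.idx_iff h0 i₀).mpr rfl), Set.mem_Icc] at hQi
    refine ⟨hQi, fun i hi => ?_⟩
    have hQ2 := hzQ i
    rw [if_neg (fun hc => hi ((Stmt7Aux.idx_iff h0 i).mp hc)), Set.mem_Icc] at hQ2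
    rw [abs_le]
    constructor <;> linarith [hQ2.1, hQ2.2]
  -- the main pointwise estimates
  have hmain : ∀ x ∈ frontier (cubeW N),
      dist x (Ψ (F (ρ x))) ≤ ε ∧ 1 < Stmt7Aux.Ms (Ψ (F (ρ x)) - c₀) := by
    intro x hx
    have hxM : Stmt7Aux.Ms (x - c₀) = 1 := by rw [hfr] at hx; exact hx
    have hnx : ‖x - c₀‖ ≤ s := by
      have := Stmt7Aux.norm_le_sqrt_mul_Ms (x - c₀)
      rw [hxM, mul_one] at this
      exact this
    have hρfr : ρ x ∈ frontier (cubeW N) := by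
      rw [hfr]
      show Stmt7Aux.Ms (ρ x - c₀) = 1
      rw [hMsρ x]
      exact hxM
    by_cases hP : ρ x ∈ cubeP N
    · -- Case B : the cap case
      obtain ⟨hz0, hzco⟩ := hPco (ρ x) hP
      have hui₀ : (ρ x - c₀) i₀ = 1 := by
        show ρ x i₀ - c₀ i₀ = 1
        rw [hz0, hc₀last]
        norm_num
      have hHsu : Stmt7Aux.Hs i₀ (ρ x - c₀) ≤ 1/2 := by
        refine Stmt7Aux.Hs_le (by norm_num) fun i hi => ?_
        show |ρ x i - c₀ i| ≤ 1/2
        rw [hc₀ne i hi, sub_zero]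
        exact hzco i hi
      have hcone_u : Stmt7Aux.Hs i₀ (ρ x - c₀) < (ρ x - c₀) i₀ := by
        rw [hui₀]; linarith
      have hxz : x - c₀ = Stmt7Aux.cmap i₀ a (ρ x - c₀) := by
        rw [hρap, add_sub_cancel_right, Stmt7Aux.ccomp ha]
      have hcru : Stmt7Aux.cr i₀ (ρ x - c₀) = Stmt7Aux.Hs i₀ (ρ x - c₀) := by
        rw [Stmt7Aux.cr, max_eq_left hcone_u.le, hui₀, div_one]
      have hxi₀ : x i₀ = 0 := by
        have h1 : (x - c₀) i₀ = 1 := by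
          rw [hxz, Stmt7Aux.cmap_apply_i₀, hui₀]
        have h2 : x i₀ - c₀ i₀ = 1 := h1
        rw [hc₀last] at h2
        linarith
      have hxco : ∀ i, i ≠ i₀ → |x i| ≤ β := by
        intro i hi
        have h1 : (x - c₀) i = Stmt7Aux.cmu a (Stmt7Aux.cr i₀ (ρ x - c₀)) * (ρ x - c₀) i := by
          rw [hxz, Stmt7Aux.cmap_apply_ne _ hi]
        have h2 : x i - c₀ i = x i := by rw [hc₀ne i hi, sub_zero]
        have h3 : |x i| = Stmt7Aux.cmu a (Stmt7Aux.cr i₀ (ρ x - c₀)) * |(ρ x - c₀) i| := by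
          rw [← h2]
          show |(x - c₀) i| = _
          rw [h1, abs_mul, abs_of_pos (Stmt7Aux.cmu_pos ha (Stmt7Aux.cr_nonneg _)
            (Stmt7Aux.cr_le_one _))]
        rw [h3, hcru]
        calc Stmt7Aux.cmu a (Stmt7Aux.Hs i₀ (ρ x - c₀)) * |(ρ x - c₀) i|
            ≤ Stmt7Aux.cmu a (Stmt7Aux.Hs i₀ (ρ x - c₀)) * Stmt7Aux.Hs i₀ (ρ x - c₀) := by
              apply mul_le_mul_of_nonneg_left (Stmt7Aux.abs_le_Hs _ hi)
              exact (Stmt7Aux.cmu_pos ha (by rw [hcru] at *; exact Stmt7Aux.Hs_nonneg i₀ _)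
                (by rw [← hcru]; exact Stmt7Aux.cr_le_one _)).le
          _ ≤ β := hlam _ (Stmt7Aux.Hs_nonneg i₀ _) hHsu
      have hMsx : Stmt7Aux.Ms x ≤ β := by
        refine Stmt7Aux.Ms_le hβ0.le fun i => ?_
        by_cases hi : i = i₀
        · rw [hi, hxi₀, abs_zero]; exact hβ0.le
        · exact hxco i hi
      -- now the image point
      have hyQ : F (ρ x) ∈ cubeQ N := hFP ⟨ρ x, hP, rfl⟩
      obtain ⟨⟨hy0, hy1⟩, hyco⟩ := hQco (F (ρ x)) hyQ
      have hzyi₀ : (F (ρ x) - c₀) i₀ = F (ρ x) i₀ + 1 := by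
        show F (ρ x) i₀ - c₀ i₀ = _
        rw [hc₀last]
        ring
      have hzy1 : 1 ≤ (F (ρ x) - c₀) i₀ := by rw [hzyi₀]; linarith
      have hzy2 : (F (ρ x) - c₀) i₀ ≤ 2 := by rw [hzyi₀]; linarith
      have hHszy : Stmt7Aux.Hs i₀ (F (ρ x) - c₀) ≤ 1/2 := by
        refine Stmt7Aux.Hs_le (by norm_num) fun i hi => ?_
        show |F (ρ x) i - c₀ i| ≤ 1/2
        rw [hc₀ne i hi, sub_zero]
        exact hyco i hi
      have hconezy : Stmt7Aux.Hs i₀ (F (ρ x) - c₀) < (F (ρ x) - c₀) i₀ := by linarith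
      have hzyi₀pos : (0:ℝ) < (F (ρ x) - c₀) i₀ := by linarith
      have hcrzy : Stmt7Aux.cr i₀ (F (ρ x) - c₀)
          = Stmt7Aux.Hs i₀ (F (ρ x) - c₀) / (F (ρ x) - c₀) i₀ := Stmt7Aux.cr_cone hconezy
      have hcr2 : Stmt7Aux.cr i₀ (F (ρ x) - c₀) ≤ 1/2 := by
        rw [hcrzy, div_le_iff₀ hzyi₀pos]
        linarith only [hHszy, hzy1]
      have hcrmul : Stmt7Aux.cr i₀ (F (ρ x) - c₀) * (F (ρ x) - c₀) i₀
          = Stmt7Aux.Hs i₀ (F (ρ x) - c₀) := by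
        rw [hcrzy, div_mul_cancel₀ _ (ne_of_gt hzyi₀pos)]
      have hw1i₀ : Stmt7Aux.cmap i₀ a (F (ρ x) - c₀) i₀ = (F (ρ x) - c₀) i₀ :=
        Stmt7Aux.cmap_apply_i₀ _
      have hw1co : ∀ i, i ≠ i₀ → |Stmt7Aux.cmap i₀ a (F (ρ x) - c₀) i| ≤ 2*β := by
        intro i hi
        rw [Stmt7Aux.cmap_apply_ne _ hi, abs_mul,
          abs_of_pos (Stmt7Aux.cmu_pos ha (Stmt7Aux.cr_nonneg _) (Stmt7Aux.cr_le_one _))]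
        calc Stmt7Aux.cmu a (Stmt7Aux.cr i₀ (F (ρ x) - c₀)) * |(F (ρ x) - c₀) i|
            ≤ Stmt7Aux.cmu a (Stmt7Aux.cr i₀ (F (ρ x) - c₀)) * Stmt7Aux.Hs i₀ (F (ρ x) - c₀) :=
              mul_le_mul_of_nonneg_left (Stmt7Aux.abs_le_Hs _ hi)
                (Stmt7Aux.cmu_pos ha (Stmt7Aux.cr_nonneg _) (Stmt7Aux.cr_le_one _)).le
          _ = (Stmt7Aux.cmu a (Stmt7Aux.cr i₀ (F (ρ x) - c₀))
                * Stmt7Aux.cr i₀ (F (ρ x) - c₀)) * (F (ρ x) - c₀) i₀ := by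
              rw [mul_assoc, hcrmul]
          _ ≤ β * 2 := by
              apply mul_le_mul (hlam _ (Stmt7Aux.cr_nonneg _) hcr2) hzy2 (by linarith) hβ0.le
          _ = 2*β := by ring
      have hHsw1 : Stmt7Aux.Hs i₀ (Stmt7Aux.cmap i₀ a (F (ρ x) - c₀)) ≤ 2*β :=
        Stmt7Aux.Hs_le (by linarith) hw1co
      have hMsw1 : Stmt7Aux.Ms (Stmt7Aux.cmap i₀ a (F (ρ x) - c₀)) = (F (ρ x) - c₀) i₀ := by
        rw [Stmt7Aux.Ms_eq_max i₀, hw1i₀, abs_of_pos hzyi₀pos]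
        apply max_eq_right
        calc Stmt7Aux.Hs i₀ (Stmt7Aux.cmap i₀ a (F (ρ x) - c₀)) ≤ 2*β := hHsw1
          _ ≤ 1 := by linarith
          _ ≤ (F (ρ x) - c₀) i₀ := hzy1
      -- the radial factor
      have hfac : Stmt7Aux.rf t (Stmt7Aux.Ms (Stmt7Aux.cmap i₀ a (F (ρ x) - c₀)))
          * (F (ρ x) - c₀) i₀ = 1 + t + t*((F (ρ x) - c₀) i₀ - 1) := by
        rw [hMsw1, Stmt7Aux.rf]
        split_ifs with hm
        · have hm1 : (F (ρ x) - c₀) i₀ = 1 := le_antisymm hm hzy1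
          rw [hm1]
          ring
        · push_neg at hm
          rw [max_eq_right (by linarith only [hm] : (1:ℝ) ≤ (F (ρ x) - c₀) i₀)]
          rw [div_mul_cancel₀ _ (ne_of_gt hzyi₀pos)]
      have hfacpos : 0 < Stmt7Aux.rf t (Stmt7Aux.Ms (Stmt7Aux.cmap i₀ a (F (ρ x) - c₀))) :=
        Stmt7Aux.rf_pos ht0 _
      have hfacle : Stmt7Aux.rf t (Stmt7Aux.Ms (Stmt7Aux.cmap i₀ a (F (ρ x) - c₀))) ≤ 3 := by
        rw [hMsw1, Stmt7Aux.rf]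
        split_ifs with hm
        · linarith
        · push_neg at hm
          rw [max_eq_right (by linarith : (1:ℝ) ≤ (F (ρ x) - c₀) i₀)]
          rw [div_le_iff₀ hzyi₀pos]
          have hp1 : 0 ≤ (1 - t) * ((F (ρ x) - c₀) i₀ - 1) :=
            mul_nonneg (by linarith only [ht1]) (by linarith only [hzy1])
          linarith only [hp1, hzy1, ht0, ht1]
      -- coordinates of the image point
      have hψeq : Ψ (F (ρ x)) = Stmt7Aux.rmap t (Stmt7Aux.cmap i₀ a (F (ρ x) - c₀)) + c₀ :=
        hΨap _
      have hrme : Stmt7Aux.rmap t (Stmt7Aux.cmap i₀ a (F (ρ x) - c₀))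
          = Stmt7Aux.rf t (Stmt7Aux.Ms (Stmt7Aux.cmap i₀ a (F (ρ x) - c₀)))
            • Stmt7Aux.cmap i₀ a (F (ρ x) - c₀) := rfl
      have hψco : ∀ i, i ≠ i₀ → |Ψ (F (ρ x)) i| ≤ 6*β := by
        intro i hi
        have h1 : Ψ (F (ρ x)) i
            = Stmt7Aux.rf t (Stmt7Aux.Ms (Stmt7Aux.cmap i₀ a (F (ρ x) - c₀)))
              * Stmt7Aux.cmap i₀ a (F (ρ x) - c₀) i + c₀ i := by
          rw [hψeq]; rfl
        rw [h1, hc₀ne i hi, add_zero, abs_mul, abs_of_pos hfacpos]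
        calc _ ≤ (3:ℝ) * (2*β) := by
              apply mul_le_mul hfacle (hw1co i hi) (abs_nonneg _) (by norm_num)
          _ = 6*β := by ring
      have hψi₀l : t ≤ Ψ (F (ρ x)) i₀ ∧ Ψ (F (ρ x)) i₀ ≤ 2*t := by
        have h1 : Ψ (F (ρ x)) i₀
            = Stmt7Aux.rf t (Stmt7Aux.Ms (Stmt7Aux.cmap i₀ a (F (ρ x) - c₀)))
              * Stmt7Aux.cmap i₀ a (F (ρ x) - c₀) i₀ + c₀ i₀ := by
          rw [hψeq]; rfl
        rw [h1, hw1i₀, hc₀last, hfac]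
        have hq1 : 0 ≤ t * ((F (ρ x) - c₀) i₀ - 1) :=
          mul_nonneg ht0.le (by linarith only [hzy1])
        have hq2 : 0 ≤ t * (2 - (F (ρ x) - c₀) i₀) :=
          mul_nonneg ht0.le (by linarith only [hzy2])
        constructor
        · linarith only [hq1]
        · linarith only [hq2]
      have hMsψ : Stmt7Aux.Ms (Ψ (F (ρ x))) ≤ 6*β + 2*t := by
        refine Stmt7Aux.Ms_le (by linarith only [hβ0, ht0]) fun i => ?_
        by_cases hi : i = i₀
        · rw [hi, abs_of_nonneg (by linarith only [hψi₀l.1, ht0] : (0:ℝ) ≤ Ψ (F (ρ x)) i₀)]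
          linarith only [hψi₀l.2, hβ0]
        · calc |Ψ (F (ρ x)) i| ≤ 6*β := hψco i hi
            _ ≤ 6*β + 2*t := by linarith only [ht0]
      constructor
      · -- the distance estimate
        rw [dist_eq_norm]
        have h1 : ‖x - Ψ (F (ρ x))‖ ≤ ‖x‖ + ‖Ψ (F (ρ x))‖ := norm_sub_le _ _
        have h2 : ‖x‖ ≤ s * β := by
          calc ‖x‖ ≤ s * Stmt7Aux.Ms x := Stmt7Aux.norm_le_sqrt_mul_Ms x
            _ ≤ s * β := mul_le_mul_of_nonneg_left hMsx hs0
        have h3 : ‖Ψ (F (ρ x))‖ ≤ s * (6*β + 2*t) := by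
          calc ‖Ψ (F (ρ x))‖ ≤ s * Stmt7Aux.Ms (Ψ (F (ρ x))) :=
                Stmt7Aux.norm_le_sqrt_mul_Ms _
            _ ≤ s * (6*β + 2*t) := mul_le_mul_of_nonneg_left hMsψ hs0
        have h4 : s * β ≤ s * δ := mul_le_mul_of_nonneg_left hβδ hs0
        have h5 : s * t ≤ s * δ := mul_le_mul_of_nonneg_left htδ hs0
        calc ‖x - Ψ (F (ρ x))‖ ≤ s * β + s * (6*β + 2*t) := by linarith only [h1, h2, h3]
          _ = 7 * (s*β) + 2 * (s*t) := by ring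
          _ ≤ 7 * (s*δ) + 2 * (s*δ) := by linarith only [h4, h5]
          _ = 9 * (s*δ) := by ring
          _ ≤ 9 * (ε/16) := by linarith only [hsδ]
          _ ≤ ε := by linarith only [hε]
      · -- the exterior estimate
        have h1 : Ψ (F (ρ x)) - c₀ = Stmt7Aux.rmap t (Stmt7Aux.cmap i₀ a (F (ρ x) - c₀)) := by
          rw [hψeq, add_sub_cancel_right]
        rw [h1, Stmt7Aux.Ms_rmap ht0]
        have h2 := hfac
        rw [hMsw1] at h2 ⊢
        rw [h2]
        have hq1 : 0 ≤ t * ((F (ρ x) - c₀) i₀ - 1) :=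
          mul_nonneg ht0.le (by linarith only [hzy1])
        linarith only [hq1, ht0]
    · -- Case A : the fixed part
      have hfix : F (ρ x) = ρ x := hFfix (ρ x) ⟨hρfr, hP⟩
      rw [hfix, hcompΨρ x]
      have hrm : Stmt7Aux.rmap t (x - c₀) = (1+t) • (x - c₀) := by
        rw [Stmt7Aux.rmap, hxM, Stmt7Aux.rf, if_pos le_rfl]
      constructor
      · rw [dist_eq_norm, hrm]
        have hdiff : x - ((1+t) • (x - c₀) + c₀) = -(t • (x - c₀)) := by
          rw [add_smul, one_smul]
          abel
        rw [hdiff, norm_neg, norm_smul, Real.norm_eq_abs, abs_of_pos ht0]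
        calc t * ‖x - c₀‖ ≤ t * s := mul_le_mul_of_nonneg_left hnx ht0.le
          _ = s * t := by ring
          _ ≤ s * δ := mul_le_mul_of_nonneg_left htδ hs0
          _ ≤ ε/16 := hsδ
          _ ≤ ε := by linarith only [hε]
      · rw [hrm, add_sub_cancel_right, Stmt7Aux.Ms_smul, hxM,
          abs_of_pos (by linarith only [ht0] : (0:ℝ) < 1 + t), mul_one]
        linarith only [ht0]
  -- assemble the answer
  refine ⟨fun x => Ψ (F (ρ (x : EuclideanSpace ℝ (Fin N)))), ?_, ?_, ?_, ?_⟩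
  · -- embedding
    have hρW : ∀ x : frontier (cubeW N), ρ (x : EuclideanSpace ℝ (Fin N)) ∈ cubeW N := by
      intro x
      have hx : Stmt7Aux.Ms ((x : EuclideanSpace ℝ (Fin N)) - c₀) = 1 :=
        (Set.ext_iff.mp hfr _).mp x.2
      exact (Stmt7Aux.mem_cubeW_iff_Ms h0 _).mpr (le_of_eq ((hMsρ _).trans hx))
    have h1 : Topology.IsEmbedding
        (fun x : frontier (cubeW N) => ρ (x : EuclideanSpace ℝ (Fin N))) :=
      ρ.isEmbedding.comp Topology.IsEmbedding.subtypeVal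
    have hg : Topology.IsEmbedding
        (Set.codRestrict (fun x : frontier (cubeW N) =>
          ρ (x : EuclideanSpace ℝ (Fin N))) (cubeW N) hρW) :=
      Topology.IsEmbedding.codRestrict h1 (cubeW N) hρW
    exact Ψ.isEmbedding.comp (hFemb.comp hg)
  · -- the distance estimate
    exact fun x => (hmain x x.2).1
  · -- the exterior
    rintro _ ⟨x, rfl⟩
    have h2 := (hmain x x.2).2
    exact Stmt7Aux.mem_sphereExt_of h0 h2
  · -- ambient homeomorphism
    refine ⟨Ψ.symm, ?_⟩
    have hrange : Set.range (fun x : frontier (cubeW N) =>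
        Ψ (F (ρ (x : EuclideanSpace ℝ (Fin N)))))
        = Ψ '' (F '' (⇑ρ '' (frontier (cubeW N)))) := by
      rw [show (fun x : frontier (cubeW N) => Ψ (F (ρ (x : EuclideanSpace ℝ (Fin N)))))
        = ((⇑Ψ) ∘ (F ∘ ⇑ρ)) ∘ (Subtype.val) from rfl, Set.range_comp, Subtype.range_coe,
        Set.image_comp, Set.image_comp]
    have hρim : ⇑ρ '' (frontier (cubeW N)) = frontier (cubeW N) := by
      ext w
      constructor
      · rintro ⟨z, hz, rfl⟩
        rw [hfr] at hz ⊢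
        show Stmt7Aux.Ms (ρ z - c₀) = 1
        rw [hMsρ]
        exact hz
      · intro hw
        refine ⟨ρ.symm w, ?_, ρ.apply_symm_apply w⟩
        rw [hfr] at hw ⊢
        show Stmt7Aux.Ms (ρ.symm w - c₀) = 1
        rw [hMsρs]
        exact hw
    have him : Ψ.symm '' (Ψ '' (F '' (frontier (cubeW N)))) = F '' (frontier (cubeW N)) := by
      rw [← Set.image_comp]
      have : (⇑Ψ.symm ∘ ⇑Ψ) = id := by
        funext p
        exact Ψ.symm_apply_apply p
      rw [this, Set.image_id]
    rw [hrange, hρim, him, hSg]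
end
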